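/- Let r > 0 and let (S, s) be a pointed proper r-connected metric space whose asymptotic cones are all transitive. Suppose there exists a constant K such that ν_S(i, 4i) ≤ K for all real i ≥ r. Then for any non-principal ultrafilter ω and any two points p, q in the asymptotic cone Cone^ω(S), there exist K+1 points p = p_0, p_1, ..., p_K = q in Cone^ω(S) such that d^ω(p_j, p_{j+1}) ≤ d^ω(p, q)/2 for all 0 ≤ j < K. -/

import Mathlib

open Filter

/-- A chain (m-path) of length `k` from `a` to `b`. -/
def IsRPath {S : Type*} [MetricSpace S] (m : ℝ) (k : ℕ) (a b : S) (c : ℕ → S) : Prop :=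
  c 0 = a ∧ c k = b ∧ ∀ i < k, dist (c i) (c (i + 1)) ≤ m

/-- `|t|_m`: the minimal length of an `m`-path from `s` to `t`. -/
noncomputable def pathLen {S : Type*} [MetricSpace S] (s : S) (m : ℝ) (t : S) : ℕ :=
  sInf {k : ℕ | ∃ c : ℕ → S, IsRPath m k s t c}

/-- `ν_S(m, n) = max { |t|_m : d(s,t) ≤ n }`. -/
noncomputable def nu {S : Type*} [MetricSpace S] (s : S) (m n : ℝ) : ℕ :=
  sSup (pathLen s m '' {t : S | dist s t ≤ n})

/-- An ultrafilter on `ℕ` is non-principal iff it contains the cofinite filter. -/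
def Nonprincipal (ω : Ultrafilter ℕ) : Prop := (ω : Filter ℕ) ≤ Filter.cofinite

/-- Admissible sequences for the asymptotic cone with scaling sequence `cᵢ = i`:
sequences at bounded scaled distance from the observation point `s`. The
ultrafilter `ω` is a parameter fixing the pseudometric below. -/
structure Precone (S : Type*) [MetricSpace S] (s : S) (ω : Ultrafilter ℕ) : Type _ where
  seq : ℕ → S
  bounded : ∃ B : ℝ, ∀ i : ℕ, 1 ≤ i → dist s (seq i) ≤ B * i

namespace Precone

variable {S : Type*} [MetricSpace S] {s : S} {ω : Ultrafilter ℕ}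

lemma bounded_div (x y : Precone S s ω) :
    ∃ B : ℝ, ∀ i : ℕ, dist (x.seq i) (y.seq i) / i ∈ Set.Icc (0:ℝ) B := by
  obtain ⟨Bx, hBx⟩ := x.bounded
  obtain ⟨By, hBy⟩ := y.bounded
  refine ⟨max (Bx + By) 0, fun i => ⟨by positivity, ?_⟩⟩
  rcases Nat.eq_zero_or_pos i with h | h
  · simp [h, le_max_right]
  · have hi : (0:ℝ) < i := by exact_mod_cast h
    have h1 : dist (x.seq i) (y.seq i) ≤ (Bx + By) * i := by
      calc dist (x.seq i) (y.seq i) ≤ dist s (x.seq i) + dist s (y.seq i) :=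
            dist_triangle_left _ _ _
        _ ≤ Bx * i + By * i := add_le_add (hBx i h) (hBy i h)
        _ = (Bx + By) * i := by ring
    have h2 : dist (x.seq i) (y.seq i) / i ≤ ((Bx + By) * i) / i := by gcongr
    have h3 : ((Bx + By) * i : ℝ) / i = Bx + By := mul_div_cancel_right₀ _ (ne_of_gt hi)
    rw [h3] at h2
    exact le_trans h2 (le_max_left _ _)

/-- The `ω`-limit defining the cone pseudometric exists. -/
lemma tendsto_pdist (x y : Precone S s ω) :
    Tendsto (fun i => dist (x.seq i) (y.seq i) / i) (ω : Filter ℕ)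
      (nhds (limUnder (ω : Filter ℕ) (fun i => dist (x.seq i) (y.seq i) / i))) := by
  obtain ⟨B, hB⟩ := bounded_div x y
  have hle : (ω.map (fun i => dist (x.seq i) (y.seq i) / i) : Filter ℝ) ≤
      Filter.principal (Set.Icc 0 B) := by
    rw [Filter.le_principal_iff]
    exact Filter.mem_map.2 (Filter.univ_mem' hB)
  obtain ⟨c, -, hc⟩ := isCompact_Icc.ultrafilter_le_nhds
    (ω.map (fun i => dist (x.seq i) (y.seq i) / i)) hle
  exact tendsto_nhds_limUnder ⟨c, hc⟩

end Precone

/-- The pseudometric `d^ω((xᵢ),(yᵢ)) = limᵂ d(xᵢ,yᵢ)/i` on admissible sequences. -/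
noncomputable instance preconePseudoMetric (S : Type*) [MetricSpace S] (s : S)
    (ω : Ultrafilter ℕ) : PseudoMetricSpace (Precone S s ω) where
  dist x y := limUnder (ω : Filter ℕ) (fun i => dist (x.seq i) (y.seq i) / i)
  dist_self x := by
    have h : (fun i : ℕ => dist (x.seq i) (x.seq i) / i) = fun _ => (0 : ℝ) := by
      funext i; simp
    show limUnder (ω : Filter ℕ) _ = 0
    rw [h]
    exact tendsto_const_nhds.limUnder_eq
  dist_comm x y := by
    show limUnder _ _ = limUnder _ _
    congr 1
    funext i
    rw [dist_comm]
  dist_triangle x y z := by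
    show limUnder (ω : Filter ℕ) _ ≤ limUnder _ _ + limUnder _ _
    have hxz := x.tendsto_pdist z
    have hxy := x.tendsto_pdist y
    have hyz := y.tendsto_pdist z
    refine le_of_tendsto_of_tendsto hxz (hxy.add hyz) (Filter.univ_mem' fun i => ?_)
    have h1 : dist (x.seq i) (z.seq i) ≤
        dist (x.seq i) (y.seq i) + dist (y.seq i) (z.seq i) := dist_triangle _ _ _
    have hi : (0:ℝ) ≤ i := Nat.cast_nonneg i
    calc dist (x.seq i) (z.seq i) / i
        ≤ (dist (x.seq i) (y.seq i) + dist (y.seq i) (z.seq i)) / i := by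
          rcases eq_or_lt_of_le hi with h | h
          · simp [← h]
          · gcongr
      _ = dist (x.seq i) (y.seq i) / i + dist (y.seq i) (z.seq i) / i := add_div _ _ _

/-- The asymptotic cone of `(S, s)` with respect to `ω` (scaling `cᵢ = i`): the metric
quotient of the admissible sequences by the pseudometric `d^ω`. -/
abbrev Cone (S : Type*) [MetricSpace S] (s : S) (ω : Ultrafilter ℕ) : Type _ :=
  SeparationQuotient (Precone S s ω)


section AuxPath

variable {S : Type*} [MetricSpace S]

lemma IsRPath.mono' {m m' : ℝ} (h : m ≤ m') {k : ℕ} {a b : S} {c : ℕ → S}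
    (hc : IsRPath m k a b c) : IsRPath m' k a b c :=
  ⟨hc.1, hc.2.1, fun i hi => (hc.2.2 i hi).trans h⟩

lemma exists_minPath {s t : S} {m : ℝ} (h : ∃ k c, IsRPath m k s t c) :
    ∃ c, IsRPath m (pathLen s m t) s t c := by
  have hne : {k : ℕ | ∃ c : ℕ → S, IsRPath m k s t c}.Nonempty := by
    obtain ⟨k, c, hc⟩ := h; exact ⟨k, c, hc⟩
  exact Nat.sInf_mem hne

lemma pathLen_le {s t : S} {m : ℝ} {k : ℕ} {c : ℕ → S} (h : IsRPath m k s t c) :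
    pathLen s m t ≤ k := Nat.sInf_le ⟨c, h⟩

lemma pathLen_le_succ {s t u : S} {m : ℝ}
    (h : ∃ k c, IsRPath m k s t c) (hd : dist t u ≤ m) :
    pathLen s m u ≤ pathLen s m t + 1 := by
  obtain ⟨c, hc0, hck, hcs⟩ := exists_minPath h
  set k := pathLen s m t with hk
  refine pathLen_le (c := fun j => if j = k + 1 then u else c j) ⟨?_, ?_, ?_⟩
  · show (if 0 = k + 1 then u else c 0) = s
    rw [if_neg (by omega : 0 ≠ k + 1)]; exact hc0
  · simp
  · intro j hj
    rcases eq_or_lt_of_le (Nat.lt_succ_iff.mp hj) with hjk | hjk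
    · subst hjk
      simp only [if_pos rfl, if_neg (by omega : k ≠ k + 1)]
      rw [hck]; exact hd
    · simp only [if_neg (by omega : j ≠ k + 1), if_neg (by omega : j + 1 ≠ k + 1)]
      exact hcs j hjk

lemma dist_le_of_path {m : ℝ} {k : ℕ} {a b : S} {c : ℕ → S}
    (h : IsRPath m k a b c) : ∀ j ≤ k, dist a (c j) ≤ j * m := by
  intro j hj
  induction j with
  | zero => simp [h.1]
  | succ n ih =>
    have h1 := ih (by omega)
    calc dist a (c (n+1)) ≤ dist a (c n) + dist (c n) (c (n+1)) := dist_triangle _ _ _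
      _ ≤ n * m + m := add_le_add h1 (h.2.2 n (by omega))
      _ ≤ (↑(n+1) : ℝ) * m := le_of_eq (by push_cast; ring)

lemma bddAbove_pathLen [ProperSpace S] (s : S) {m : ℝ} (hm : 0 < m)
    (hconn : ∀ t : S, ∃ k c, IsRPath m k s t c) (n : ℝ) :
    BddAbove (pathLen s m '' {t : S | dist s t ≤ n}) := by
  have hF : IsCompact (Metric.closedBall s n) := isCompact_closedBall s n
  obtain ⟨T, hT⟩ := hF.elim_finite_subcover (fun t : S => Metric.ball t m)
    (fun t => Metric.isOpen_ball)
    (fun u _ => Set.mem_iUnion.2 ⟨u, Metric.mem_ball_self hm⟩)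
  refine ⟨T.sup (pathLen s m) + 1, ?_⟩
  rintro _ ⟨t, ht, rfl⟩
  have htF : t ∈ Metric.closedBall s n := by
    rw [Metric.mem_closedBall, dist_comm]; exact ht
  obtain ⟨u, huT, hu⟩ := Set.mem_iUnion₂.1 (hT htF)
  have h2 : pathLen s m t ≤ pathLen s m u + 1 :=
    pathLen_le_succ (hconn u) (by rw [dist_comm]; exact (Metric.mem_ball.1 hu).le)
  exact h2.trans (Nat.add_le_add_right (Finset.le_sup huT) 1)

end AuxPath

lemma Precone.ext' {S : Type*} [MetricSpace S] {s : S} {ω : Ultrafilter ℕ}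
    {x y : Precone S s ω} (h : x.seq = y.seq) : x = y := by
  cases x; cases y; cases h; rfl

/-- Lemma 4.9 of the paper. If `(S,s)` is asymptotically transitive,
proper, `r`-connected, and `ν_S(i, 4i) ≤ K` for all real `i ≥ r`, then any two points
`p, q` of any asymptotic cone (w.r.t. a non-principal ultrafilter) are joined by `K+1`
points with consecutive distances at most `d^ω(p,q)/2`. -/
theorem cone_chains_of_nu_bounded {S : Type*} [MetricSpace S] [ProperSpace S]
    (s : S) (r : ℝ) (hr : 0 < r)
    (hconn : ∀ t : S, ∃ (k : ℕ) (c : ℕ → S), IsRPath r k s t c)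
    (htrans : ∀ ω : Ultrafilter ℕ, Nonprincipal ω → ∀ p q : Cone S s ω,
      ∃ e : Cone S s ω ≃ᵢ Cone S s ω, e p = q)
    (K : ℕ) (hK : ∀ i : ℝ, r ≤ i → nu s i (4 * i) ≤ K) :
    ∀ ω : Ultrafilter ℕ, Nonprincipal ω → ∀ p q : Cone S s ω,
      ∃ c : ℕ → Cone S s ω, c 0 = p ∧ c K = q ∧
        ∀ j < K, dist (c j) (c (j + 1)) ≤ dist p q / 2 := by
  intro ω hω p q
  haveI : (ω : Filter ℕ).NeBot := ω.neBot
  set base : Precone S s ω := ⟨fun _ => s, ⟨0, fun i _ => by simp⟩⟩ with hbasedef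
  obtain ⟨e, he⟩ := htrans ω hω (SeparationQuotient.mk base) p
  obtain ⟨y, hy⟩ := SeparationQuotient.surjective_mk (e.symm q)
  set D := dist p q with hD
  have hDnn : 0 ≤ D := dist_nonneg
  rcases eq_or_lt_of_le hDnn with hD0 | hDpos
  · -- degenerate case `p = q`
    have hpq : p = q := eq_of_dist_eq_zero hD0.symm
    exact ⟨fun _ => p, rfl, hpq, fun j _ => by
      rw [dist_self]
      positivity⟩
  · -- main case
    have hdby : dist base y = D := by
      rw [← SeparationQuotient.dist_mk, hy, ← e.dist_eq, he, e.apply_symm_apply]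
    have hT : Tendsto (fun i : ℕ => dist (base.seq i) (y.seq i) / i) (ω : Filter ℕ)
        (nhds D) := by
      have h1 : Tendsto (fun i : ℕ => dist (base.seq i) (y.seq i) / i) (ω : Filter ℕ)
          (nhds (dist base y)) := Precone.tendsto_pdist base y
      rwa [hdby] at h1
    set A : Set ℕ := {i | 1 ≤ i ∧ r ≤ D * i / 2 ∧ dist s (y.seq i) ≤ 2 * D * i} with hAdef
    have hA : A ∈ (ω : Filter ℕ) := by
      have h3 : ∀ᶠ i in (ω : Filter ℕ), dist (base.seq i) (y.seq i) / i < 2 * D :=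
        hT.eventually_lt_const (by linarith)
      have h12 : ∀ᶠ (i : ℕ) in (ω : Filter ℕ), 1 ≤ i ∧ r ≤ D * (i : ℝ) / 2 := by
        apply hω
        rw [Nat.cofinite_eq_atTop]
        obtain ⟨N, hN⟩ := exists_nat_ge (2 * r / D)
        filter_upwards [Filter.eventually_ge_atTop (max 1 N)] with i hi
        have hi1 : 1 ≤ i := le_trans (le_max_left _ _) hi
        have hiN : (N : ℝ) ≤ i := by exact_mod_cast le_trans (le_max_right _ _) hi
        have h2r : 2 * r / D ≤ i := le_trans hN hiN
        have h2r' : 2 * r ≤ D * i := by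
          rw [div_le_iff₀ hDpos] at h2r; linarith
        exact ⟨hi1, by linarith⟩
      filter_upwards [h12, h3] with i hi12 hi3
      refine ⟨hi12.1, hi12.2, ?_⟩
      have hi' : (0 : ℝ) < i := by exact_mod_cast hi12.1
      have h4 := (div_lt_iff₀ hi').1 hi3
      calc dist s (y.seq i) = dist (base.seq i) (y.seq i) := rfl
        _ ≤ 2 * D * i := by linarith
    have hKbound : ∀ i ∈ A, pathLen s (D * i / 2) (y.seq i) ≤ K := by
      intro i hi
      obtain ⟨hi1, hir, hid⟩ := hi
      have hm : (0 : ℝ) < D * i / 2 := lt_of_lt_of_le hr hir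
      have hconn' : ∀ t : S, ∃ k c, IsRPath (D * i / 2) k s t c := by
        intro t
        obtain ⟨k, c, hc⟩ := hconn t
        exact ⟨k, c, hc.mono' hir⟩
      have hbdd := bddAbove_pathLen s hm hconn' (4 * (D * i / 2))
      have hmem : pathLen s (D * i / 2) (y.seq i) ∈
          pathLen s (D * i / 2) '' {t : S | dist s t ≤ 4 * (D * i / 2)} :=
        ⟨y.seq i, by simp only [Set.mem_setOf_eq]; linarith, rfl⟩
      exact (le_csSup hbdd hmem).trans (hK (D * i / 2) hir)
    have key : ∀ i : ℕ, ∃ c : ℕ → S, c 0 = s ∧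
        (∀ j, dist (c j) (c (j + 1)) ≤ D * i / 2) ∧
        (∀ j, dist s (c j) ≤ j * (D * i / 2)) ∧ (i ∈ A → c K = y.seq i) := by
      intro i
      by_cases hi : i ∈ A
      · have hir : r ≤ D * i / 2 := hi.2.1
        have hm0 : (0 : ℝ) ≤ D * i / 2 := le_trans hr.le hir
        have hconn' : ∃ k c, IsRPath (D * i / 2) k s (y.seq i) c := by
          obtain ⟨k, c, hc⟩ := hconn (y.seq i)
          exact ⟨k, c, hc.mono' hir⟩
        obtain ⟨c, hc⟩ := exists_minPath hconn'
        set k := pathLen s (D * i / 2) (y.seq i) with hk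
        have hkK : k ≤ K := hKbound i hi
        refine ⟨fun j => c (min j k), by simp [hc.1], ?_, ?_, ?_⟩
        · intro j
          show dist (c (min j k)) (c (min (j + 1) k)) ≤ D * i / 2
          rcases lt_or_ge j k with h | h
          · rw [min_eq_left h.le, min_eq_left (by omega : j + 1 ≤ k)]
            exact hc.2.2 j h
          · rw [min_eq_right h, min_eq_right (by omega : k ≤ j + 1), dist_self]
            exact hm0
        · intro j
          have h1 := dist_le_of_path hc (min j k) (min_le_right _ _)
          refine h1.trans ?_
          have hle : ((min j k : ℕ) : ℝ) ≤ j := by exact_mod_cast min_le_left j k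
          exact mul_le_mul_of_nonneg_right hle hm0
        · intro _
          show c (min K k) = y.seq i
          rw [min_eq_right hkK]
          exact hc.2.1
      · refine ⟨fun _ => s, rfl, ?_, ?_, fun h => absurd h hi⟩
        · intro j; rw [dist_self]; positivity
        · intro j; rw [dist_self]; positivity
    choose c hc0 hcstep hcbound hcK using key
    set x : ℕ → Precone S s ω := fun j =>
      ⟨fun i => c i j, ⟨j * (D / 2), fun i _ => by
        refine (hcbound i j).trans (le_of_eq ?_)
        ring⟩⟩ with hxdef
    refine ⟨fun j => e (SeparationQuotient.mk (x j)), ?_, ?_, ?_⟩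
    · have hx0 : x 0 = base := Precone.ext' (funext fun i => hc0 i)
      show e (SeparationQuotient.mk (x 0)) = p
      rw [hx0, he]
    · have hmk : SeparationQuotient.mk (x K) = SeparationQuotient.mk y := by
        apply eq_of_dist_eq_zero
        rw [SeparationQuotient.dist_mk]
        show limUnder (ω : Filter ℕ) (fun i => dist ((x K).seq i) (y.seq i) / i) = 0
        apply Filter.Tendsto.limUnder_eq
        apply Filter.Tendsto.congr' _ tendsto_const_nhds
        filter_upwards [hA] with i hi
        show (0 : ℝ) = dist (c i K) (y.seq i) / i
        rw [hcK i hi, dist_self, zero_div]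
      show e (SeparationQuotient.mk (x K)) = q
      rw [hmk, hy, e.apply_symm_apply]
    · intro j _
      have heq : dist (e (SeparationQuotient.mk (x j))) (e (SeparationQuotient.mk (x (j + 1))))
          = dist (x j) (x (j + 1)) := by
        rw [e.dist_eq, SeparationQuotient.dist_mk]
      rw [heq]
      have hT2 : Tendsto (fun i : ℕ => dist ((x j).seq i) ((x (j + 1)).seq i) / i)
          (ω : Filter ℕ) (nhds (dist (x j) (x (j + 1)))) := Precone.tendsto_pdist _ _
      refine le_of_tendsto hT2 (Filter.Eventually.of_forall fun i => ?_)
      show dist (c i j) (c i (j + 1)) / i ≤ dist p q / 2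
      rcases Nat.eq_zero_or_pos i with h0 | h0
      · rw [h0]
        simp only [Nat.cast_zero, div_zero]
        positivity
      · have hi' : (0 : ℝ) < i := by exact_mod_cast h0
        have h1 : dist (c i j) (c i (j + 1)) / i ≤ (D * i / 2) / i := by
          gcongr
          exact hcstep i j
        have h2 : (D * i / 2) / i = D / 2 := by field_simp
        rw [h2] at h1
        exact h1
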